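/- Let K be a field, 3 ≤ q ≤ ∞, and for each n let d_n = d(K, n, q) be the minimal number d such that some quadratic K-algebra with n generators and d relations has vanishing q-th graded component (vanishing some component, if q = ∞). Then the limit of d_n/n² as n → ∞ exists and equals inf_n d_n/n². -/

import Mathlib

open TensorProduct

namespace GS

variable (K : Type*) [Field K] (V : Type*) [AddCommGroup V] [Module K V]

/-- The tensor product of two subspaces, as a subspace of the tensor product. -/
noncomputable def tsub {M N : Type*} [AddCommGroup M] [Module K M] [AddCommGroup N] [Module K N]
    (A : Submodule K M) (B : Submodule K N) : Submodule K (M ⊗[K] N) :=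
  LinearMap.range (TensorProduct.map A.subtype B.subtype)

/-- `V ≃ V^{⊗1}`. -/
noncomputable def pow1 : V ≃ₗ[K] ⨂[K]^1 V :=
  (PiTensorProduct.subsingletonEquiv (R := K) (s := fun _ : Fin 1 => V) (0 : Fin 1)).symm

/-- `V ⊗ V ≃ V^{⊗2}`. -/
noncomputable def pow2 : (V ⊗[K] V) ≃ₗ[K] ⨂[K]^2 V :=
  (TensorProduct.congr (pow1 K V) (pow1 K V)).trans
    ((TensorPower.mulEquiv (n := 1) (m := 1)).trans (TensorPower.cast K V (by norm_num)))

/-- The subspace `V^{⊗a} ⊗ L ⊗ V^{⊗b}` of `V^{⊗(a+(2+b))}`. -/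
noncomputable def segAux (a b : ℕ) (L : Submodule K (V ⊗[K] V)) :
    Submodule K (⨂[K]^(a + (2 + b)) V) :=
  Submodule.map (TensorPower.mulEquiv (R := K) (M := V) (n := a) (m := 2 + b)).toLinearMap
    (tsub K (⊤ : Submodule K (⨂[K]^a V))
      (Submodule.map (TensorPower.mulEquiv (R := K) (M := V) (n := 2) (m := b)).toLinearMap
        (tsub K (L.map (pow2 K V).toLinearMap) (⊤ : Submodule K (⨂[K]^b V)))))

/-- For `j : Fin (q-1)`, the subspace `V^{⊗j} ⊗ L ⊗ V^{⊗(q-2-j)}` of `V^{⊗q}`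
(the `(j+1)`-st shift of `L`). -/
noncomputable def shiftSub (q : ℕ) (L : Submodule K (V ⊗[K] V)) (j : Fin (q - 1)) :
    Submodule K (⨂[K]^q V) :=
  Submodule.map (TensorPower.cast K V (by have := j.2; omega : (j : ℕ) + (2 + (q - 2 - j)) = q)).toLinearMap
    (segAux K V j (q - 2 - j) L)

/-- `E_q(L,V) = ⋂_{j=1}^{q-1} V^{⊗(j-1)} ⊗ L ⊗ V^{⊗(q-1-j)} ⊆ V^{⊗q}`. -/
noncomputable def Eint (q : ℕ) (L : Submodule K (V ⊗[K] V)) : Submodule K (⨂[K]^q V) :=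
  ⨅ j : Fin (q - 1), shiftSub K V q L j

/-- The degree-`q` component of the two-sided ideal generated by the subspace
`M ⊆ V ⊗ V` of quadratic relations: the sum of all shifts `V^{⊗(j-1)} ⊗ M ⊗ V^{⊗(q-1-j)}`. -/
noncomputable def idealComp (q : ℕ) (M : Submodule K (V ⊗[K] V)) : Submodule K (⨂[K]^q V) :=
  ⨆ j : Fin (q - 1), shiftSub K V q M j

/-- The dimension of the degree-`q` component of the quadratic algebra with space of
relations `M ⊆ V ⊗ V` (the quotient of `V^{⊗q}` by the degree-`q` component of the ideal). -/
noncomputable def quadDim (q : ℕ) (M : Submodule K (V ⊗[K] V)) : ℕ :=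
  Module.finrank K ((⨂[K]^q V) ⧸ idealComp K V q M)

/-- `h_q(K,n,d)`: the minimal dimension of the `q`-th graded component over all quadratic
`K`-algebras with `n` generators and `d` (linearly independent) quadratic relations. -/
noncomputable def hq (n d q : ℕ) : ℕ :=
  sInf { h | ∃ M : Submodule K ((Fin n → K) ⊗[K] (Fin n → K)),
      Module.finrank K M = d ∧ quadDim K (Fin n → K) q M = h }

end GS

open Filter

namespace GSAux
open GS PiTensorProduct Module Submodule

variable {K : Type*} [Field K] {V W : Type*} [AddCommGroup V] [Module K V]
  [AddCommGroup W] [Module K W]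

instance finite_tensorPower [Module.Finite K V] (q : ℕ) : Module.Finite K (⨂[K]^q V) := by
  induction q with
  | zero => exact Module.Finite.equiv (PiTensorProduct.isEmptyEquiv (Fin 0)).symm
  | succ q ih =>
      have e : (⨂[K]^q V ⊗[K] ⨂[K]^1 V) ≃ₗ[K] ⨂[K]^(q+1) V := TensorPower.mulEquiv
      have : Module.Finite K (⨂[K]^1 V) := Module.Finite.equiv (pow1 K V)
      exact Module.Finite.equiv e

theorem tsub_eq_span {M N : Type*} [AddCommGroup M] [Module K M] [AddCommGroup N] [Module K N]
    (A : Submodule K M) (B : Submodule K N) :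
    tsub K A B = Submodule.span K {t | ∃ a ∈ A, ∃ b ∈ B, a ⊗ₜ[K] b = t} := by
  rw [tsub, TensorProduct.range_map_eq_span_tmul]
  congr 1
  ext t
  constructor
  · rintro ⟨a, b, rfl⟩
    exact ⟨a, a.2, b, b.2, rfl⟩
  · rintro ⟨a, ha, b, hb, rfl⟩
    exact ⟨⟨a, ha⟩, ⟨b, hb⟩, rfl⟩

theorem tmul_mem_tsub {M N : Type*} [AddCommGroup M] [Module K M] [AddCommGroup N] [Module K N]
    {A : Submodule K M} {B : Submodule K N} {a : M} {b : N} (ha : a ∈ A) (hb : b ∈ B) :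
    a ⊗ₜ[K] b ∈ tsub K A B := by
  rw [tsub_eq_span]
  exact Submodule.subset_span ⟨a, ha, b, hb, rfl⟩

theorem tsub_mono {M N : Type*} [AddCommGroup M] [Module K M] [AddCommGroup N] [Module K N]
    {A A' : Submodule K M} {B B' : Submodule K N} (hA : A ≤ A') (hB : B ≤ B') :
    tsub K A B ≤ tsub K A' B' := by
  rw [tsub_eq_span, tsub_eq_span]
  apply Submodule.span_mono
  rintro t ⟨a, ha, b, hb, rfl⟩
  exact ⟨a, hA ha, b, hB hb, rfl⟩

theorem map_tsub_le {M N M' N' : Type*} [AddCommGroup M] [Module K M] [AddCommGroup N]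
    [Module K N] [AddCommGroup M'] [Module K M'] [AddCommGroup N'] [Module K N']
    (A : Submodule K M) (B : Submodule K N) (g : M →ₗ[K] M') (h : N →ₗ[K] N') :
    (tsub K A B).map (TensorProduct.map g h) ≤ tsub K (A.map g) (B.map h) := by
  rw [tsub_eq_span, tsub_eq_span, Submodule.map_span]
  apply Submodule.span_mono
  rintro t ⟨_, ⟨a, ha, b, hb, rfl⟩, rfl⟩
  exact ⟨g a, ⟨a, ha, rfl⟩, h b, ⟨b, hb, rfl⟩, by simp⟩

theorem tsub_top_top {M N : Type*} [AddCommGroup M] [Module K M] [AddCommGroup N] [Module K N] :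
    tsub K (⊤ : Submodule K M) (⊤ : Submodule K N) = ⊤ := by
  rw [tsub_eq_span, ← TensorProduct.span_tmul_eq_top K M N]
  congr 1
  ext t
  simp

theorem finrank_tsub_le [FiniteDimensional K V] [FiniteDimensional K W]
    (A : Submodule K V) (B : Submodule K W) :
    finrank K (tsub K A B) ≤ finrank K A * finrank K B := by
  rw [tsub]
  calc finrank K (LinearMap.range (TensorProduct.map A.subtype B.subtype))
      ≤ finrank K (A ⊗[K] B) := LinearMap.finrank_range_le _
    _ = finrank K A * finrank K B := Module.finrank_tensorProduct

end GSAux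
namespace GSAux
open GS PiTensorProduct Module Submodule

variable {K : Type*} [Field K] {V W : Type*} [AddCommGroup V] [Module K V]
  [AddCommGroup W] [Module K W]

theorem mulEquiv_tprod {a b : ℕ} (x : Fin a → V) (y : Fin b → V) :
    (TensorPower.mulEquiv (R := K) (M := V)) (tprod K x ⊗ₜ[K] tprod K y)
      = tprod K (Fin.append x y) := by
  rw [← TensorPower.gMul_def, TensorPower.tprod_mul_tprod]

theorem pow1_apply (v : V) : pow1 K V v = tprod K (fun _ : Fin 1 => v) := by
  simp [GS.pow1]

theorem pow2_tmul (v w : V) :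
    pow2 K V (v ⊗ₜ[K] w) = tprod K (![v, w]) := by
  rw [GS.pow2]
  simp only [LinearEquiv.trans_apply, TensorProduct.congr_tmul, pow1_apply]
  rw [mulEquiv_tprod, TensorPower.cast_tprod]
  congr 1
  funext p
  fin_cases p <;> simp [Fin.append, Fin.addCases]

/-- Naturality of `mulEquiv` for a family of maps. -/
theorem map_mulEquiv {a b : ℕ} (f : Fin (a + b) → (V →ₗ[K] W))
    (u : (⨂[K]^a V) ⊗[K] (⨂[K]^b V)) :
    PiTensorProduct.map f (TensorPower.mulEquiv (R := K) u)
      = TensorPower.mulEquiv (R := K)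
          ((TensorProduct.map (PiTensorProduct.map (fun i => f (Fin.castAdd b i)))
            (PiTensorProduct.map (fun i => f (Fin.natAdd a i)))) u) := by
  induction u with
  | zero => simp
  | add u v hu hv => simp only [map_add, hu, hv]
  | tmul t s =>
      refine PiTensorProduct.induction_on t ?_ ?_
      · intro c x
        refine PiTensorProduct.induction_on s ?_ ?_
        · intro c' y
          simp only [TensorProduct.smul_tmul, TensorProduct.tmul_smul, map_smul,
            TensorProduct.map_tmul, PiTensorProduct.map_tprod]
          rw [mulEquiv_tprod, mulEquiv_tprod, PiTensorProduct.map_tprod]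
          have he : (fun i => (f i) (Fin.append x y i))
              = Fin.append (fun i => f (Fin.castAdd b i) (x i))
                  (fun i => f (Fin.natAdd a i) (y i)) := by
            funext p
            refine Fin.addCases (fun i => ?_) (fun i => ?_) p <;>
              simp [Fin.append_left, Fin.append_right]
          rw [he]
        · intro s s' hs hs'
          simp only [TensorProduct.tmul_add, map_add] at *
          rw [hs, hs']
      · intro t t' ht ht'
        simp only [TensorProduct.add_tmul, map_add] at *
        rw [ht, ht']

/-- Naturality of `cast` for a family of maps. -/
theorem map_cast {i j : ℕ} (h : i = j) (f : Fin j → (V →ₗ[K] W)) (t : ⨂[K]^i V) :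
    PiTensorProduct.map f (TensorPower.cast K V h t)
      = TensorPower.cast K W h (PiTensorProduct.map (fun p => f (Fin.cast h p)) t) := by
  subst h
  rw [TensorPower.cast_refl, TensorPower.cast_refl]
  simp only [LinearEquiv.refl_apply]
  congr

end GSAux
namespace GSAux
open GS PiTensorProduct Module Submodule

variable {K : Type*} [Field K] {V W : Type*} [AddCommGroup V] [Module K V]
  [AddCommGroup W] [Module K W]

theorem map_pow2 (f : Fin 2 → (V →ₗ[K] W)) (u : V ⊗[K] V) :
    PiTensorProduct.map f (pow2 K V u) = pow2 K W ((TensorProduct.map (f 0) (f 1)) u) := by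
  induction u with
  | zero => simp
  | add u v hu hv => simp only [map_add, hu, hv]
  | tmul v w =>
      rw [pow2_tmul, TensorProduct.map_tmul, pow2_tmul, PiTensorProduct.map_tprod]
      congr 1
      funext p
      fin_cases p <;> rfl

theorem shiftSub_mono (q : ℕ) {L L' : Submodule K (V ⊗[K] V)} (h : L ≤ L') (j : Fin (q - 1)) :
    shiftSub K V q L j ≤ shiftSub K V q L' j := by
  unfold shiftSub segAux
  exact Submodule.map_mono (Submodule.map_mono (tsub_mono le_rfl
    (Submodule.map_mono (tsub_mono (Submodule.map_mono h) le_rfl))))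

theorem tprod_mem_shiftSub {q : ℕ} (L : Submodule K (V ⊗[K] V)) (j : Fin (q - 1))
    (z : Fin q → V)
    (h : z ⟨j, by have := j.2; omega⟩ ⊗ₜ[K] z ⟨(j : ℕ) + 1, by have := j.2; omega⟩ ∈ L) :
    tprod K z ∈ shiftSub K V q L j := by
  have hq' : (j : ℕ) + (2 + (q - 2 - (j : ℕ))) = q := by have := j.2; omega
  set a : ℕ := (j : ℕ) with ha
  set b : ℕ := q - 2 - (j : ℕ) with hb
  set x : Fin a → V := fun i => z (Fin.cast hq' (Fin.castAdd (2 + b) i)) with hx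
  set mid : Fin 2 → V := ![z ⟨a, by omega⟩, z ⟨a + 1, by omega⟩] with hmid
  set y : Fin b → V := fun i => z (Fin.cast hq' (Fin.natAdd a (Fin.natAdd 2 i))) with hy
  have hfun : Fin.append x (Fin.append mid y) = z ∘ Fin.cast hq' := by
    funext p
    refine Fin.addCases (fun i => ?_) (fun i => ?_) p
    · rw [Fin.append_left]; rfl
    · rw [Fin.append_right]
      refine Fin.addCases (fun i2 => ?_) (fun i3 => ?_) i
      · rw [Fin.append_left]
        fin_cases i2
        · show z ⟨a, by omega⟩ = z _
          exact congrArg z (Fin.ext (by simp))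
        · show z ⟨a + 1, by omega⟩ = z _
          exact congrArg z (Fin.ext (by simp))
      · rw [Fin.append_right]; rfl
  -- the element of shiftSub
  have h1 : pow2 K V (z ⟨a, by omega⟩ ⊗ₜ[K] z ⟨a + 1, by omega⟩) ∈ L.map (pow2 K V).toLinearMap :=
    Submodule.mem_map_of_mem h
  have h2 : pow2 K V (z ⟨a, by omega⟩ ⊗ₜ[K] z ⟨a + 1, by omega⟩) ⊗ₜ[K] tprod K y
      ∈ tsub K (L.map (pow2 K V).toLinearMap) (⊤ : Submodule K (⨂[K]^b V)) :=
    tmul_mem_tsub h1 Submodule.mem_top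
  have h3 := Submodule.mem_map_of_mem
    (f := (TensorPower.mulEquiv (R := K) (M := V) (n := 2) (m := b)).toLinearMap) h2
  have h4 := tmul_mem_tsub (A := (⊤ : Submodule K (⨂[K]^a V)))
    (a := tprod K x) Submodule.mem_top h3
  have h5 := Submodule.mem_map_of_mem
    (f := (TensorPower.mulEquiv (R := K) (M := V) (n := a) (m := 2 + b)).toLinearMap) h4
  have h6 := Submodule.mem_map_of_mem (f := (TensorPower.cast K V hq').toLinearMap) h5
  have heq : (TensorPower.cast K V hq')
      ((TensorPower.mulEquiv (R := K)) ((tprod K x) ⊗ₜ[K]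
        (TensorPower.mulEquiv (R := K))
          ((pow2 K V (z ⟨a, by omega⟩ ⊗ₜ[K] z ⟨a + 1, by omega⟩)) ⊗ₜ[K] tprod K y)))
      = tprod K z := by
    rw [pow2_tmul, mulEquiv_tprod, mulEquiv_tprod, TensorPower.cast_tprod]
    rw [show (![z ⟨a, by omega⟩, z ⟨a + 1, by omega⟩] : Fin 2 → V) = mid from rfl, hfun]
    refine congrArg _ (funext fun p => ?_)
    show z (Fin.cast hq' (Fin.cast hq'.symm p)) = z p
    exact congrArg z (Fin.ext (by simp))
  simp only [LinearEquiv.coe_coe] at h6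
  rw [heq] at h6
  exact h6

end GSAux
namespace GSAux
open GS PiTensorProduct Module Submodule

variable {K : Type*} [Field K] {V W : Type*} [AddCommGroup V] [Module K V]
  [AddCommGroup W] [Module K W]

theorem map_segAux_le (a b : ℕ) (g : Fin (a + (2 + b)) → (V →ₗ[K] W))
    (L : Submodule K (V ⊗[K] V)) (L' : Submodule K (W ⊗[K] W))
    (hL : L.map (TensorProduct.map (g (Fin.natAdd a (Fin.castAdd b 0)))
      (g (Fin.natAdd a (Fin.castAdd b 1)))) ≤ L') :
    (segAux K V a b L).map (PiTensorProduct.map g) ≤ segAux K W a b L' := by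
  intro w hw
  obtain ⟨s, hs, rfl⟩ := Submodule.mem_map.1 hw
  obtain ⟨t, ht, rfl⟩ := Submodule.mem_map.1 hs
  rw [segAux, Submodule.mem_map]
  refine ⟨(TensorProduct.map (PiTensorProduct.map fun i => g (Fin.castAdd (2 + b) i))
    (PiTensorProduct.map fun i => g (Fin.natAdd a i))) t, ?_, (map_mulEquiv g t).symm⟩
  have h1 : (TensorProduct.map (PiTensorProduct.map fun i => g (Fin.castAdd (2 + b) i))
      (PiTensorProduct.map fun i => g (Fin.natAdd a i))) t ∈
      tsub K ((⊤ : Submodule K (⨂[K]^a V)).map (PiTensorProduct.map fun i =>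
          g (Fin.castAdd (2 + b) i)))
        ((Submodule.map (TensorPower.mulEquiv (n := 2) (m := b)).toLinearMap
          (tsub K (L.map (pow2 K V).toLinearMap) (⊤ : Submodule K (⨂[K]^b V)))).map
          (PiTensorProduct.map fun i => g (Fin.natAdd a i))) :=
    map_tsub_le _ _ _ _ (Submodule.mem_map_of_mem ht)
  refine tsub_mono le_top ?_ h1
  -- inner: map ΦB (map mulEquiv (tsub (L.map pow2) ⊤)) ≤ map mulEquiv (tsub (L'.map pow2) ⊤)
  intro u hu
  obtain ⟨u1, hu1, rfl⟩ := Submodule.mem_map.1 hu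
  obtain ⟨r, hr, rfl⟩ := Submodule.mem_map.1 hu1
  rw [LinearEquiv.coe_coe, map_mulEquiv (fun i => g (Fin.natAdd a i)) r, Submodule.mem_map]
  refine ⟨_, ?_, rfl⟩
  have h2 : (TensorProduct.map
      (PiTensorProduct.map fun i => g (Fin.natAdd a (Fin.castAdd b i)))
      (PiTensorProduct.map fun i => g (Fin.natAdd a (Fin.natAdd 2 i)))) r ∈
      tsub K ((L.map (pow2 K V).toLinearMap).map
          (PiTensorProduct.map fun i => g (Fin.natAdd a (Fin.castAdd b i))))
        ((⊤ : Submodule K (⨂[K]^b V)).map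
          (PiTensorProduct.map fun i => g (Fin.natAdd a (Fin.natAdd 2 i)))) :=
    map_tsub_le _ _ _ _ (Submodule.mem_map_of_mem hr)
  refine tsub_mono ?_ le_top h2
  -- (L.map pow2).map Φ₂ ≤ L'.map pow2
  intro u' hu'
  obtain ⟨l, hl, rfl⟩ := Submodule.mem_map.1 hu'
  obtain ⟨l0, hl0, rfl⟩ := Submodule.mem_map.1 hl
  rw [LinearEquiv.coe_coe, map_pow2]
  exact Submodule.mem_map_of_mem (hL (Submodule.mem_map_of_mem hl0))

theorem map_shiftSub_le {q : ℕ} (f : Fin q → (V →ₗ[K] W)) (L : Submodule K (V ⊗[K] V))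
    (L' : Submodule K (W ⊗[K] W)) (j : Fin (q - 1))
    (hL : L.map (TensorProduct.map (f ⟨j, by have := j.2; omega⟩)
      (f ⟨(j : ℕ) + 1, by have := j.2; omega⟩)) ≤ L') :
    (shiftSub K V q L j).map (PiTensorProduct.map f) ≤ shiftSub K W q L' j := by
  have hq' : (j : ℕ) + (2 + (q - 2 - (j : ℕ))) = q := by have := j.2; omega
  intro w hw
  obtain ⟨y, hy, rfl⟩ := Submodule.mem_map.1 hw
  obtain ⟨s, hs, rfl⟩ := Submodule.mem_map.1 hy
  rw [shiftSub, Submodule.mem_map]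
  refine ⟨PiTensorProduct.map (fun p => f (Fin.cast hq' p)) s, ?_, (map_cast hq' f s).symm⟩
  have e0 : f (Fin.cast hq' (Fin.natAdd (j : ℕ) (Fin.castAdd (q - 2 - (j : ℕ)) 0)))
      = f ⟨j, by have := j.2; omega⟩ := congrArg f (Fin.ext (by simp))
  have e1 : f (Fin.cast hq' (Fin.natAdd (j : ℕ) (Fin.castAdd (q - 2 - (j : ℕ)) 1)))
      = f ⟨(j : ℕ) + 1, by have := j.2; omega⟩ := congrArg f (Fin.ext (by simp))
  refine map_segAux_le _ _ _ L L' ?_ (Submodule.mem_map_of_mem hs)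
  rw [e0, e1]
  exact hL

end GSAux
namespace GSAux
open GS PiTensorProduct Module Submodule

variable {K : Type*} [Field K] {V : Type*} [AddCommGroup V] [Module K V]

theorem map_equiv_top {B : Type*} [AddCommGroup B] [Module K B] (e : V ≃ₗ[K] B) :
    (⊤ : Submodule K V).map (e : V →ₗ[K] B) = ⊤ :=
  Submodule.map_top (e : V →ₗ[K] B) ▸ LinearEquiv.range e

theorem shiftSub_top (q : ℕ) (j : Fin (q - 1)) :
    shiftSub K V q (⊤ : Submodule K (V ⊗[K] V)) j = ⊤ := by
  rw [shiftSub, segAux, map_equiv_top, tsub_top_top, map_equiv_top, tsub_top_top,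
    map_equiv_top, map_equiv_top]

theorem idealComp_top (q : ℕ) (hq2 : 2 ≤ q) :
    idealComp K V q (⊤ : Submodule K (V ⊗[K] V)) = ⊤ := by
  refine top_unique ?_
  rw [← shiftSub_top (V := V) q ⟨0, by omega⟩]
  exact le_iSup _ _

theorem two_le_of_idealComp_eq_top [Nontrivial V] {q : ℕ} {M : Submodule K (V ⊗[K] V)}
    (h : idealComp K V q M = ⊤) : 2 ≤ q := by
  by_contra hq
  push_neg at hq
  have hq1 : q - 1 = 0 := by omega
  have hsub : Subsingleton (⨂[K]^q V) := by
    have hempty : IsEmpty (Fin (q - 1)) := by rw [hq1]; infer_instance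
    have hbot : (idealComp K V q M) = ⊥ := by
      rw [idealComp]
      exact iSup_of_empty _
    rw [hbot] at h
    constructor
    intro x y
    have hx : x ∈ (⊥ : Submodule K (⨂[K]^q V)) := h ▸ Submodule.mem_top
    have hy : y ∈ (⊥ : Submodule K (⨂[K]^q V)) := h ▸ Submodule.mem_top
    rw [Submodule.mem_bot] at hx hy
    rw [hx, hy]
  interval_cases q
  · have : Nontrivial (⨂[K]^0 V) := (PiTensorProduct.isEmptyEquiv (Fin 0)).toEquiv.nontrivial
    exact absurd hsub (not_subsingleton _)
  · have : Nontrivial (⨂[K]^1 V) := (pow1 K V).symm.toEquiv.nontrivial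
    exact absurd hsub (not_subsingleton _)

theorem quadDim_eq_zero_iff [FiniteDimensional K V] (q : ℕ) (M : Submodule K (V ⊗[K] V)) :
    quadDim K V q M = 0 ↔ idealComp K V q M = ⊤ := by
  rw [quadDim, Module.finrank_zero_iff, Submodule.Quotient.subsingleton_iff]

theorem finrank_iSup_le {ι : Type*} [Fintype ι] {E : Type*} [AddCommGroup E] [Module K E]
    [FiniteDimensional K E] (p : ι → Submodule K E) :
    finrank K ↥(⨆ i, p i) ≤ ∑ i, finrank K (p i) := by
  have key : ∀ s : Finset ι, finrank K ↥(s.sup p) ≤ ∑ i ∈ s, finrank K (p i) := by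
    intro s
    induction s using Finset.cons_induction with
    | empty => simp [Finset.sup_empty, finrank_bot]
    | cons a s ha ih =>
        rw [Finset.sup_cons, Finset.sum_cons]
        have h2 := Submodule.finrank_sup_add_finrank_inf_eq (p a) (s.sup p)
        omega
  have huniv : (⨆ i, p i) = Finset.univ.sup p :=
    le_antisymm (iSup_le fun i => Finset.le_sup (Finset.mem_univ i))
      (Finset.sup_le fun i _ => le_iSup p i)
  rw [huniv]
  simpa using key Finset.univ

theorem exists_submodule_finrank {E : Type*} [AddCommGroup E] [Module K E]
    [FiniteDimensional K E] {d : ℕ} (h : d ≤ finrank K E) :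
    ∃ M : Submodule K E, finrank K M = d := by
  have B := Module.finBasis K E
  have hv : LinearIndependent K (B ∘ Fin.castLE h) :=
    B.linearIndependent.comp _ (Fin.castLE_injective h)
  exact ⟨Submodule.span K (Set.range (B ∘ Fin.castLE h)), by
    rw [finrank_span_eq_card hv, Fintype.card_fin]⟩

end GSAux
namespace GSAux
open GS PiTensorProduct Module Submodule

variable {K : Type*} [Field K]

theorem eq_top_of_tprod_single_mem {N q : ℕ} (P : Submodule K (⨂[K]^q (Fin N → K)))
    (h : ∀ c : Fin q → Fin N, PiTensorProduct.tprod K (fun p => Pi.single (c p) (1 : K)) ∈ P) : P = ⊤ := by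
  have hml : (P.mkQ).compMultilinearMap (tprod K (s := fun _ : Fin q => Fin N → K)) = 0 := by
    refine Module.Basis.ext_multilinear (fun _ => Pi.basisFun K (Fin N)) fun v => ?_
    simp only [LinearMap.compMultilinearMap_apply, MultilinearMap.zero_apply, Pi.basisFun_apply,
      Submodule.mkQ_apply, Submodule.Quotient.mk_eq_zero]
    exact h v
  refine top_unique ?_
  rw [← PiTensorProduct.span_tprod_eq_top]
  rw [Submodule.span_le]
  rintro _ ⟨z, rfl⟩
  have := MultilinearMap.ext_iff.1 hml z
  simp only [LinearMap.compMultilinearMap_apply, MultilinearMap.zero_apply,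
    Submodule.mkQ_apply, Submodule.Quotient.mk_eq_zero] at this
  exact this

/-- The embedding of indices `Fin n × Fin m → Fin N`. -/
def emb (n m N : ℕ) (hN : n * m ≤ N) (i : Fin n) (a : Fin m) : Fin N :=
  ⟨(a : ℕ) * n + i, by
    have h1 := a.2
    have h2 := i.2
    have h3 : ((a : ℕ) + 1) * n ≤ m * n := Nat.mul_le_mul_right n h1
    have h4 : m * n = n * m := Nat.mul_comm m n
    nlinarith⟩

theorem emb_inj (n m N : ℕ) (hN : n * m ≤ N) :
    Function.Injective (fun p : Fin n × Fin m => emb n m N hN p.1 p.2) := by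
  rintro ⟨i, a⟩ ⟨i', a'⟩ h
  simp only [emb, Fin.mk.injEq] at h
  have hn : 0 < n := i.pos
  have hi : (i : ℕ) = i' := by
    have h1 : ((a : ℕ) * n + i) % n = ((a' : ℕ) * n + i') % n := by rw [h]
    rwa [Nat.mul_add_mod', Nat.mul_add_mod', Nat.mod_eq_of_lt i.2, Nat.mod_eq_of_lt i'.2] at h1
  have ha : (a : ℕ) = a' := by
    have h2 : (a : ℕ) * n = (a' : ℕ) * n := by omega
    exact Nat.eq_of_mul_eq_mul_right hn h2
  simp only [Prod.mk.injEq]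
  exact ⟨Fin.ext hi, Fin.ext ha⟩

/-- The `a`-th block inclusion `K^n →ₗ K^N`. -/
noncomputable def iota (K : Type*) [Field K] (n m N : ℕ) (hN : n * m ≤ N) (a : Fin m) :
    (Fin n → K) →ₗ[K] (Fin N → K) :=
  ∑ i : Fin n, (LinearMap.single K (fun _ => K) (emb n m N hN i a)).comp (LinearMap.proj i)

theorem iota_single (n m N : ℕ) (hN : n * m ≤ N) (a : Fin m) (i : Fin n) :
    iota K n m N hN a (Pi.single i 1) = Pi.single (emb n m N hN i a) (1 : K) := by
  rw [iota, LinearMap.sum_apply]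
  rw [Finset.sum_eq_single i]
  · simp
  · intro i' _ hne
    simp [Pi.single_eq_of_ne hne]
  · simp

theorem finrank_span_finset_le {E : Type*} [AddCommGroup E] [Module K E] (s : Finset E) :
    finrank K (Submodule.span K (↑s : Set E)) ≤ s.card :=
  Module.finrank_le_of_rank_le (rank_span_finset_le s)

end GSAux
namespace GSAux
open GS PiTensorProduct Module Submodule

variable {K : Type*} [Field K]

theorem key (n m N q d : ℕ) (hn : 1 ≤ n) (hN : n * m ≤ N)
    (M : Submodule K ((Fin n → K) ⊗[K] (Fin n → K)))
    (hd : finrank K M = d)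
    (htop : idealComp K (Fin n → K) q M = ⊤) :
    ∃ M' : Submodule K ((Fin N → K) ⊗[K] (Fin N → K)),
      finrank K M' ≤ m ^ 2 * d + 2 * ((N - n * m) * N) ∧
      idealComp K (Fin N → K) q M' = ⊤ := by
  classical
  haveI : Nonempty (Fin n) := ⟨⟨0, hn⟩⟩
  have hq2 : 2 ≤ q := two_le_of_idealComp_eq_top htop
  set Femb : Finset (Fin N) :=
    Finset.image (fun p : Fin n × Fin m => emb n m N hN p.1 p.2) Finset.univ with hFemb
  set Xset : Finset (Fin N → K) :=
    Finset.image (fun t => Pi.single t (1 : K)) (Finset.univ \ Femb) with hXset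
  set X : Submodule K (Fin N → K) := Submodule.span K (↑Xset) with hX
  set Mblocks : Submodule K ((Fin N → K) ⊗[K] (Fin N → K)) :=
    ⨆ p : Fin m × Fin m, M.map
      (TensorProduct.map (iota K n m N hN p.1) (iota K n m N hN p.2)) with hMb
  refine ⟨Mblocks ⊔ (tsub K X ⊤ ⊔ tsub K ⊤ X), ?_, ?_⟩
  · -- dimension bound
    have hsup : ∀ A B : Submodule K ((Fin N → K) ⊗[K] (Fin N → K)),
        finrank K ↥(A ⊔ B) ≤ finrank K A + finrank K B := by
      intro A B
      have := Submodule.finrank_sup_add_finrank_inf_eq A B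
      omega
    have hXd : finrank K X ≤ N - n * m := by
      refine le_trans (finrank_span_finset_le Xset) ?_
      rw [hXset]
      refine le_trans (Finset.card_image_le) ?_
      rw [Finset.card_sdiff_of_subset (Finset.subset_univ _)]
      have : Femb.card = n * m := by
        rw [hFemb, Finset.card_image_of_injective _ (emb_inj n m N hN)]
        simp [Fintype.card_prod]
      simp [this]
    have hMbd : finrank K Mblocks ≤ m ^ 2 * d := by
      refine le_trans (finrank_iSup_le _) ?_
      have hterm : ∀ p : Fin m × Fin m, finrank K
          ↥(M.map (TensorProduct.map (iota K n m N hN p.1) (iota K n m N hN p.2))) ≤ d :=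
        fun p => hd ▸ Submodule.finrank_map_le _ _
      refine le_trans (Finset.sum_le_sum fun p _ => hterm p) ?_
      simp [smul_eq_mul, pow_two]
    have hNrank : finrank K (Fin N → K) = N := by simp
    have ht1 : finrank K (tsub K X (⊤ : Submodule K (Fin N → K))) ≤ (N - n * m) * N := by
      refine le_trans (finrank_tsub_le _ _) ?_
      rw [finrank_top, hNrank]
      exact Nat.mul_le_mul_right N hXd
    have ht2 : finrank K (tsub K (⊤ : Submodule K (Fin N → K)) X) ≤ N * (N - n * m) := by
      refine le_trans (finrank_tsub_le _ _) ?_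
      rw [finrank_top, hNrank]
      exact Nat.mul_le_mul_left N hXd
    calc finrank K ↥(Mblocks ⊔ (tsub K X ⊤ ⊔ tsub K ⊤ X))
        ≤ finrank K Mblocks + finrank K ↥(tsub K X ⊤ ⊔ tsub K ⊤ X) := hsup _ _
      _ ≤ finrank K Mblocks + (finrank K (tsub K X ⊤) + finrank K (tsub K ⊤ X)) :=
          Nat.add_le_add_left (hsup _ _) _
      _ ≤ m ^ 2 * d + ((N - n * m) * N + N * (N - n * m)) := by
          have := Nat.add_le_add ht1 ht2
          exact Nat.add_le_add hMbd this
      _ = m ^ 2 * d + 2 * ((N - n * m) * N) := by ring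
  · -- coverage
    refine eq_top_of_tprod_single_mem _ fun c => ?_
    by_cases hc : ∃ p0, c p0 ∈ Finset.univ \ Femb
    · obtain ⟨p0, hp0⟩ := hc
      have hp0q := p0.2
      set jn : ℕ := min (p0 : ℕ) (q - 2) with hjn
      have hj : jn < q - 1 := by omega
      have hsX : Pi.single (c p0) (1 : K) ∈ X := by
        rw [hX]
        refine Submodule.subset_span ?_
        rw [hXset]
        exact Finset.mem_coe.2 (Finset.mem_image_of_mem (fun t => Pi.single t (1 : K)) hp0)
      refine le_iSup (fun j => shiftSub K (Fin N → K) q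
          (Mblocks ⊔ (tsub K X ⊤ ⊔ tsub K ⊤ X)) j) ⟨jn, hj⟩
        (tprod_mem_shiftSub _ ⟨jn, hj⟩ _ ?_)
      by_cases hle : (p0 : ℕ) ≤ q - 2
      · have hz1 : c ⟨jn, by omega⟩ = c p0 := congrArg c (Fin.ext (by simp [hjn]; omega))
        rw [hz1]
        exact Submodule.mem_sup_right (Submodule.mem_sup_left
          (tmul_mem_tsub hsX Submodule.mem_top))
      · have hz2 : c ⟨jn + 1, by omega⟩ = c p0 := congrArg c (Fin.ext (by simp [hjn]; omega))
        rw [hz2]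
        exact Submodule.mem_sup_right (Submodule.mem_sup_right
          (tmul_mem_tsub Submodule.mem_top hsX))
    · push_neg at hc
      have hmem : ∀ p, c p ∈ Femb := by
        intro p
        have := hc p
        simp only [Finset.mem_sdiff, Finset.mem_univ, true_and, not_not] at this
        exact this
      have hex : ∀ p, ∃ x : Fin n × Fin m, emb n m N hN x.1 x.2 = c p := by
        intro p
        obtain ⟨x, _, hx⟩ := Finset.mem_image.1 (hmem p)
        exact ⟨x, hx⟩
      choose x hx using hex
      set f : Fin q → ((Fin n → K) →ₗ[K] (Fin N → K)) :=
        fun p => iota K n m N hN ((x p).2) with hf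
      have hz : (fun p => Pi.single (c p) (1 : K))
          = fun p => f p (Pi.single ((x p).1) 1) := by
        funext p
        rw [hf]
        simp only []
        rw [iota_single, hx p]
      rw [hz, ← PiTensorProduct.map_tprod]
      have hmem0 : PiTensorProduct.tprod K (fun p => Pi.single ((x p).1) (1 : K))
          ∈ idealComp K (Fin n → K) q M := htop ▸ Submodule.mem_top
      have hle2 : (idealComp K (Fin n → K) q M).map (PiTensorProduct.map f)
          ≤ idealComp K (Fin N → K) q (Mblocks ⊔ (tsub K X ⊤ ⊔ tsub K ⊤ X)) := by
        rw [idealComp, idealComp, Submodule.map_iSup]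
        refine iSup_mono fun j => ?_
        refine le_trans (map_shiftSub_le f M
          (M.map (TensorProduct.map (f ⟨j, by have := j.2; omega⟩)
            (f ⟨(j : ℕ) + 1, by have := j.2; omega⟩))) j le_rfl) ?_
        refine shiftSub_mono _ ?_ j
        simp only [hf]
        exact le_trans (le_iSup (fun p : Fin m × Fin m => Submodule.map
            (TensorProduct.map (iota K n m N hN p.1) (iota K n m N hN p.2)) M)
          (((x ⟨j, by have := j.2; omega⟩).2),
            ((x ⟨(j : ℕ) + 1, by have := j.2; omega⟩).2))) le_sup_left
      exact hle2 (Submodule.mem_map_of_mem (f := PiTensorProduct.map f) hmem0)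

end GSAux
namespace GSAux
open GS PiTensorProduct Module Submodule Filter

variable {K : Type*} [Field K]

theorem finrank_VV (K : Type*) [Field K] (n : ℕ) :
    finrank K ((Fin n → K) ⊗[K] (Fin n → K)) = n ^ 2 := by
  rw [Module.finrank_tensorProduct]
  simp [pow_two]

theorem hq_top (n q : ℕ) (hq2 : 2 ≤ q) : hq K n (n ^ 2) q = 0 := by
  refine Nat.sInf_eq_zero.2 (Or.inl ⟨⊤, ?_, ?_⟩)
  · rw [finrank_top]
    exact finrank_VV K n
  · exact (quadDim_eq_zero_iff q ⊤).2 (idealComp_top q hq2)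

/-- From `hq K n d q = 0` with `d ≤ n²`, extract a witness. -/
theorem exists_witness {n d q : ℕ} (hd : d ≤ n ^ 2) (h : hq K n d q = 0) :
    ∃ M : Submodule K ((Fin n → K) ⊗[K] (Fin n → K)),
      finrank K M = d ∧ idealComp K (Fin n → K) q M = ⊤ := by
  rcases Nat.sInf_eq_zero.1 h with h0 | hempty
  · obtain ⟨M, hM, hq0⟩ := h0
    exact ⟨M, hM, (quadDim_eq_zero_iff q M).1 hq0⟩
  · exfalso
    obtain ⟨M₀, hM₀⟩ := exists_submodule_finrank (E := (Fin n → K) ⊗[K] (Fin n → K))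
      (d := d) (by rw [finrank_VV]; exact hd)
    have : quadDim K (Fin n → K) q M₀ ∈
        {h | ∃ M : Submodule K ((Fin n → K) ⊗[K] (Fin n → K)),
          finrank K M = d ∧ quadDim K (Fin n → K) q M = h} := ⟨M₀, hM₀, rfl⟩
    rw [hempty] at this
    exact this

theorem subadd_fixed (q : ℕ) (hq3 : 3 ≤ q) (n m N : ℕ) (hn : 1 ≤ n) (hNm : n * m ≤ N) :
    sInf {d | hq K N d q = 0} ≤
      m ^ 2 * sInf {d | hq K n d q = 0} + 2 * ((N - n * m) * N) := by
  set S : Set ℕ := {d | hq K n d q = 0} with hSdef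
  set Dn := sInf S with hDn
  have hS : n ^ 2 ∈ S := hq_top n q (by omega)
  have hmem : Dn ∈ S := Nat.sInf_mem ⟨n ^ 2, hS⟩
  have hDle : Dn ≤ n ^ 2 := Nat.sInf_le hS
  obtain ⟨M, hfrM, htop⟩ := exists_witness hDle hmem
  obtain ⟨M', hM'le, hM'top⟩ := key n m N q Dn hn hNm M hfrM htop
  have hNq : hq K N (finrank K M') q = 0 :=
    Nat.sInf_eq_zero.2 (Or.inl ⟨M', rfl, (quadDim_eq_zero_iff q M').2 hM'top⟩)
  exact le_trans (Nat.sInf_le hNq) hM'le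

theorem subadd_infty (n m N : ℕ) (hn : 1 ≤ n) (hNm : n * m ≤ N) :
    sInf {d | ∃ q, hq K N d q = 0} ≤
      m ^ 2 * sInf {d | ∃ q, hq K n d q = 0} + 2 * ((N - n * m) * N) := by
  set S : Set ℕ := {d | ∃ q, hq K n d q = 0} with hSdef
  set Dn := sInf S with hDn
  have hS : n ^ 2 ∈ S := ⟨2, hq_top n 2 le_rfl⟩
  have hmemS : Dn ∈ S := Nat.sInf_mem ⟨n ^ 2, hS⟩
  obtain ⟨q', hmem⟩ := hmemS
  have hDle : Dn ≤ n ^ 2 := Nat.sInf_le hS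
  obtain ⟨M, hfrM, htop⟩ := exists_witness hDle hmem
  obtain ⟨M', hM'le, hM'top⟩ := key n m N q' Dn hn hNm M hfrM htop
  have hNq : (∃ q, hq K N (finrank K M') q = 0) :=
    ⟨q', Nat.sInf_eq_zero.2 (Or.inl ⟨M', rfl, (quadDim_eq_zero_iff q' M').2 hM'top⟩)⟩
  exact le_trans (Nat.sInf_le hNq) hM'le

/-- The Fekete-style limit lemma. -/
theorem fekete (D : ℕ → ℕ)
    (hsub : ∀ n m N : ℕ, 1 ≤ n → n * m ≤ N →
      D N ≤ m ^ 2 * D n + 2 * ((N - n * m) * N)) :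
    Tendsto (fun n : ℕ => (D n : ℝ) / (n : ℝ) ^ 2) atTop
      (nhds (⨅ n : ℕ+, (D n : ℝ) / (n : ℝ) ^ 2)) := by
  have hbdd : BddBelow (Set.range fun n : ℕ+ => (D n : ℝ) / (n : ℝ) ^ 2) := by
    refine ⟨0, ?_⟩
    rintro _ ⟨k, rfl⟩
    positivity
  set L : ℝ := ⨅ n : ℕ+, (D n : ℝ) / (n : ℝ) ^ 2 with hL
  have hLle : ∀ k : ℕ+, L ≤ (D k : ℝ) / (k : ℝ) ^ 2 := fun k => ciInf_le hbdd k
  rw [Metric.tendsto_nhds]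
  intro ε hε
  obtain ⟨n₀, hn₀⟩ : ∃ n₀ : ℕ+, (D n₀ : ℝ) / (n₀ : ℝ) ^ 2 < L + ε / 2 :=
    exists_lt_of_ciInf_lt (by linarith)
  have htail : Tendsto (fun N : ℕ => (2 * ((n₀ : ℕ) : ℝ)) / N) atTop (nhds 0) :=
    tendsto_const_div_atTop_nhds_zero_nat _
  have h2 : ∀ᶠ N : ℕ in atTop, (2 * ((n₀ : ℕ) : ℝ)) / N < ε / 2 :=
    htail.eventually_lt_const (by linarith)
  filter_upwards [h2, eventually_ge_atTop (n₀ : ℕ), eventually_ge_atTop 1]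
    with N hN2 hNn₀ hN1
  have hn₀1 : 1 ≤ (n₀ : ℕ) := n₀.2
  obtain ⟨m, hm⟩ : ∃ m, m = N / (n₀ : ℕ) := ⟨_, rfl⟩
  have hdm : (n₀ : ℕ) * m + N % (n₀ : ℕ) = N := by rw [hm]; exact Nat.div_add_mod N _
  have hmod := Nat.mod_lt N n₀.2
  have hmul : (n₀ : ℕ) * m ≤ N := by
    rw [hm, Nat.mul_comm]
    exact Nat.div_mul_le_self N _
  have hrem : N - (n₀ : ℕ) * m < (n₀ : ℕ) := by
    calc N - (n₀ : ℕ) * m = (n₀ : ℕ) * m + N % (n₀ : ℕ) - (n₀ : ℕ) * m := by rw [hdm]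
      _ = N % (n₀ : ℕ) := Nat.add_sub_cancel_left _ _
      _ < (n₀ : ℕ) := hmod
  have hm1 : 1 ≤ m := by
    rw [hm]
    exact (Nat.one_le_div_iff n₀.2).2 hNn₀
  have hkey : D N ≤ m ^ 2 * D (n₀ : ℕ) + 2 * ((N - (n₀ : ℕ) * m) * N) :=
    hsub (n₀ : ℕ) m N hn₀1 hmul
  have hNpos : (0 : ℝ) < (N : ℝ) := by exact_mod_cast hN1
  have hn₀pos : (0 : ℝ) < ((n₀ : ℕ) : ℝ) := by exact_mod_cast hn₀1
  have cast1 : (D N : ℝ) ≤ (m : ℝ) ^ 2 * (D (n₀ : ℕ) : ℝ)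
      + 2 * (((N - (n₀ : ℕ) * m : ℕ) : ℝ) * (N : ℝ)) := by exact_mod_cast hkey
  have hremR : ((N - (n₀ : ℕ) * m : ℕ) : ℝ) ≤ ((n₀ : ℕ) : ℝ) := by
    exact_mod_cast le_of_lt hrem
  have hmul' : m * (n₀ : ℕ) ≤ N := by rw [Nat.mul_comm]; exact hmul
  have hmnR : (m : ℝ) * ((n₀ : ℕ) : ℝ) ≤ (N : ℝ) := by exact_mod_cast hmul'
  have hnum : (D N : ℝ) ≤ (m : ℝ) ^ 2 * (D (n₀ : ℕ) : ℝ) + 2 * ((n₀ : ℕ) : ℝ) * (N : ℝ) := by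
    nlinarith [hremR, hNpos, cast1]
  have hsplit : (D N : ℝ) / (N : ℝ) ^ 2
      ≤ ((m : ℝ) ^ 2 * (D (n₀ : ℕ) : ℝ)) / (N : ℝ) ^ 2
        + (2 * ((n₀ : ℕ) : ℝ) * (N : ℝ)) / (N : ℝ) ^ 2 := by
    rw [← add_div]
    gcongr
  have hterm1 : ((m : ℝ) ^ 2 * (D (n₀ : ℕ) : ℝ)) / (N : ℝ) ^ 2
      ≤ (D (n₀ : ℕ) : ℝ) / ((n₀ : ℕ) : ℝ) ^ 2 := by
    rw [div_le_div_iff₀ (by positivity) (by positivity)]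
    have hmn0 : (0 : ℝ) ≤ (m : ℝ) * ((n₀ : ℕ) : ℝ) := by positivity
    have hsq : ((m : ℝ) * ((n₀ : ℕ) : ℝ)) ^ 2 ≤ (N : ℝ) ^ 2 := by nlinarith
    nlinarith [show (0 : ℝ) ≤ (D (n₀ : ℕ) : ℝ) by positivity]
  have hterm2 : (2 * ((n₀ : ℕ) : ℝ) * (N : ℝ)) / (N : ℝ) ^ 2
      = 2 * ((n₀ : ℕ) : ℝ) / (N : ℝ) := by
    field_simp
  have hmain : (D N : ℝ) / (N : ℝ) ^ 2 < L + ε := by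
    have hcoe : ((n₀ : ℕ) : ℝ) = ((n₀ : ℕ+) : ℝ) := by norm_cast
    calc (D N : ℝ) / (N : ℝ) ^ 2
        ≤ (D (n₀ : ℕ) : ℝ) / ((n₀ : ℕ) : ℝ) ^ 2 + 2 * ((n₀ : ℕ) : ℝ) / (N : ℝ) := by
          rw [hterm2] at hsplit
          linarith
      _ < (L + ε / 2) + ε / 2 := by
          have h1 : (D (n₀ : ℕ) : ℝ) / ((n₀ : ℕ) : ℝ) ^ 2 < L + ε / 2 := by
            rw [hcoe]
            exact hn₀
          linarith
      _ = L + ε := by ring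
  have hge : L ≤ (D N : ℝ) / (N : ℝ) ^ 2 := by
    have := hLle ⟨N, by omega⟩
    convert this using 3 <;> norm_cast
  rw [Real.dist_eq, abs_of_nonneg (by linarith)]
  linarith

end GSAux
open Filter

/-- Let `K` be a field and `3 ≤ q ≤ ∞`. With
`d(K, n, q) = min{d : h_q(K,n,d) = 0}` (and `d(K, n, ∞) = min{d : h_q(K,n,d) = 0 for some q}`),
the limit of `d(K,n,q)/n²` as `n → ∞` exists and equals `inf_n d(K,n,q)/n²`. -/
theorem limit_dn_div_sq (K : Type*) [Field K] :
    (∀ q : ℕ, 3 ≤ q →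
      ∀ D : ℕ → ℕ, D = (fun n => sInf { d | GS.hq K n d q = 0 }) →
      Tendsto (fun n : ℕ => (D n : ℝ) / (n : ℝ) ^ 2) atTop
        (nhds (⨅ n : ℕ+, (D n : ℝ) / (n : ℝ) ^ 2))) ∧
    (∀ D : ℕ → ℕ, D = (fun n => sInf { d | ∃ q : ℕ, GS.hq K n d q = 0 }) →
      Tendsto (fun n : ℕ => (D n : ℝ) / (n : ℝ) ^ 2) atTop
        (nhds (⨅ n : ℕ+, (D n : ℝ) / (n : ℝ) ^ 2))) := by
  constructor
  · intro q hq3 D hD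
    subst hD
    apply GSAux.fekete
    intro n m N hn hNm
    exact GSAux.subadd_fixed q hq3 n m N hn hNm
  · intro D hD
    subst hD
    apply GSAux.fekete
    intro n m N hn hNm
    exact GSAux.subadd_infty n m N hn hNm
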